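/- Let μ be a probability Borel measure on (0,∞) with ∫ λ dμ < ∞ and ∫ |log λ| dμ < ∞. Then lim_{α→1⁻} (1/(α−1)) log ∫ λ^{1−α} dμ(λ) = −∫ log λ dμ(λ). -/

import Mathlib

open MeasureTheory Real Filter

/-- For `-1/2 ≤ u`, `|log (1+u) - u| ≤ 2 u ^ 2`. -/
lemma aux_log_approx {u : ℝ} (hu : -(1/2 : ℝ) ≤ u) :
    |Real.log (1 + u) - u| ≤ 2 * u ^ 2 := by
  have hv : (0 : ℝ) < 1 + u := by linarith
  have h1 : Real.log (1 + u) ≤ u := by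
    have := Real.log_le_sub_one_of_pos hv
    linarith
  have h2 : u - 2 * u ^ 2 ≤ Real.log (1 + u) := by
    have hvi : (0 : ℝ) < (1 + u)⁻¹ := by positivity
    have h := Real.log_le_sub_one_of_pos hvi
    rw [Real.log_inv] at h
    have hkey : 1 - (1 + u)⁻¹ ≤ Real.log (1 + u) := by linarith
    have hin : (1 + u)⁻¹ ≤ 1 - u + 2 * u ^ 2 := by
      rw [inv_le_iff_one_le_mul₀ hv]
      nlinarith [sq_nonneg u, sq_nonneg (u - 1/2)]
    linarith
  rw [abs_le]
  constructor <;> nlinarith [sq_nonneg u]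

/-- Pointwise bound for the difference quotient. -/
lemma aux_bound {a t : ℝ} (ha : 0 < a) (ht : 0 < t) (ht2 : t ≤ 1/2) :
    |(a ^ t - 1) / t| ≤ 2 * a + |Real.log a| := by
  rw [Real.rpow_def_of_pos ha, abs_div, abs_of_pos ht, div_le_iff₀ ht]
  set s := Real.log a * t with hs
  rcases le_or_gt (Real.log a) 0 with hla | hla
  · -- s ≤ 0 : |exp s - 1| ≤ -s = -log a * t
    have hsle : s ≤ 0 := mul_nonpos_of_nonpos_of_nonneg hla ht.le
    have h1 : Real.exp s ≤ 1 := Real.exp_le_one_iff.mpr hsle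
    have h2 : s + 1 ≤ Real.exp s := Real.add_one_le_exp s
    have habs : |Real.exp s - 1| ≤ -s := by
      rw [abs_of_nonpos (by linarith)]; linarith
    have hlogabs : -Real.log a ≤ |Real.log a| := neg_le_abs _
    calc |Real.exp s - 1| ≤ -s := habs
      _ = (-Real.log a) * t := by rw [hs]; ring
      _ ≤ (2 * a + |Real.log a|) * t := by
          have h3 : -Real.log a ≤ 2 * a + |Real.log a| := by
            have := abs_nonneg (Real.log a); linarith
          exact mul_le_mul_of_nonneg_right h3 ht.le
  · -- log a > 0 : exp s - 1 ≤ s * exp s ≤ (log a * t) * exp(log a / 2) ≤ 2 a t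
    have hsnn : 0 ≤ s := mul_nonneg hla.le ht.le
    have h1 : 1 ≤ Real.exp s := Real.one_le_exp hsnn
    have hms : (-s) + 1 ≤ Real.exp (-s) := Real.add_one_le_exp (-s)
    have hes : 0 < Real.exp s := Real.exp_pos s
    have hkey : Real.exp s - 1 ≤ s * Real.exp s := by
      have := mul_le_mul_of_nonneg_left hms hes.le
      rw [← Real.exp_add] at this
      simp at this
      nlinarith
    set b := Real.exp (Real.log a / 2) with hb
    have hbpos : 0 < b := Real.exp_pos _
    have hbb : b * b = a := by
      rw [hb, ← Real.exp_add]
      rw [show Real.log a / 2 + Real.log a / 2 = Real.log a by ring, Real.exp_log ha]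
    have hb1 : Real.log a / 2 + 1 ≤ b := Real.add_one_le_exp _
    have hsb : Real.exp s ≤ b := by
      rw [hb, Real.exp_le_exp, hs]
      nlinarith
    have hlab : Real.log a * b ≤ 2 * a := by nlinarith
    have habs : |Real.exp s - 1| = Real.exp s - 1 := abs_of_nonneg (by linarith)
    rw [habs]
    calc Real.exp s - 1 ≤ s * Real.exp s := hkey
      _ ≤ (Real.log a * t) * b := by rw [hs]; exact mul_le_mul_of_nonneg_left hsb (by positivity)
      _ = (Real.log a * b) * t := by ring
      _ ≤ (2 * a) * t := by gcongr
      _ ≤ (2 * a + |Real.log a|) * t := by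
          have : (0:ℝ) ≤ |Real.log a| := abs_nonneg _
          nlinarith

/-- Pointwise limit of the difference quotient. -/
lemma aux_limit {a : ℝ} (ha : 0 < a) :
    Tendsto (fun t : ℝ => (a ^ t - 1) / t) (nhdsWithin 0 (Set.Ioi 0))
      (nhds (Real.log a)) := by
  have hd : HasDerivAt (fun t : ℝ => Real.exp (Real.log a * t)) (Real.log a) 0 := by
    have h1 : HasDerivAt (fun t : ℝ => Real.log a * t) (Real.log a) 0 := by
      simpa using (hasDerivAt_id (0:ℝ)).const_mul (Real.log a)
    have := (Real.hasDerivAt_exp (Real.log a * 0)).comp 0 h1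
    rw [mul_zero, Real.exp_zero, one_mul] at this
    exact this
  rw [hasDerivAt_iff_tendsto_slope] at hd
  have hmono : nhdsWithin (0:ℝ) (Set.Ioi 0) ≤ nhdsWithin 0 {(0:ℝ)}ᶜ :=
    nhdsWithin_mono 0 (fun x hx => ne_of_gt hx)
  have h := hd.mono_left hmono
  refine h.congr fun t => ?_
  rw [slope_def_field, Real.rpow_def_of_pos ha]
  simp

theorem petz_renyi_tendsto_relative_entropy (μ : Measure ℝ) [IsProbabilityMeasure μ]
    (hpos : ∀ᵐ l ∂μ, 0 < l) (hlam : Integrable (fun l => l) μ)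
    (hlog : Integrable (fun l => |Real.log l|) μ) :
    Filter.Tendsto (fun α : ℝ => (α - 1)⁻¹ * Real.log (∫ l, l ^ (1 - α) ∂μ))
      (nhdsWithin 1 (Set.Iio 1)) (nhds (- ∫ l, Real.log l ∂μ)) := by
  set L := ∫ l, Real.log l ∂μ with hL
  set G : ℝ → ℝ := fun t => ∫ a, (a ^ t - 1) / t ∂μ with hGdef
  have hbound : Integrable (fun a => 2 * a + |Real.log a|) μ := (hlam.const_mul 2).add hlog
  have hIoc : ∀ᶠ t in nhdsWithin (0:ℝ) (Set.Ioi 0), t ∈ Set.Ioc (0:ℝ) (1/2) :=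
    Ioc_mem_nhdsGT (by norm_num)
  -- dominated convergence for the difference quotients
  have hG : Tendsto G (nhdsWithin 0 (Set.Ioi 0)) (nhds L) := by
    apply tendsto_integral_filter_of_dominated_convergence (fun a => 2 * a + |Real.log a|)
    · exact Eventually.of_forall fun t =>
        ((by measurability : Measurable fun a : ℝ => (a ^ t - 1) / t)).aestronglyMeasurable
    · filter_upwards [hIoc] with t ht
      filter_upwards [hpos] with a ha
      rw [Real.norm_eq_abs]
      exact aux_bound ha ht.1 ht.2
    · exact hbound
    · filter_upwards [hpos] with a ha
      exact aux_limit ha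
  -- integrability of `a ^ t`
  have hIntT : ∀ t : ℝ, 0 < t → t ≤ 1 → Integrable (fun a : ℝ => a ^ t) μ := by
    intro t ht ht1
    apply Integrable.mono' (g := fun a => 1 + a) ((integrable_const 1).add hlam)
    · exact ((by measurability : Measurable fun a : ℝ => a ^ t)).aestronglyMeasurable
    · filter_upwards [hpos] with a ha
      rw [Real.norm_eq_abs, abs_of_nonneg (Real.rpow_nonneg ha.le t)]
      rcases le_or_gt a 1 with h | h
      · have := Real.rpow_le_one ha.le h ht.le; linarith
      · have h2 := Real.rpow_le_rpow_of_exponent_le h.le ht1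
        rw [Real.rpow_one] at h2; linarith
  -- the key algebraic identity `∫ a ^ t = 1 + t * G t`
  have key : ∀ t : ℝ, 0 < t → t ≤ 1 → (∫ a, a ^ t ∂μ) = 1 + t * G t := by
    intro t ht ht1
    have hi := hIntT t ht ht1
    have h1 : G t = ((∫ a, a ^ t ∂μ) - 1) / t := by
      rw [hGdef]
      simp only
      rw [integral_div]
      congr 1
      rw [integral_sub hi (integrable_const 1)]
      simp
    rw [h1]
    field_simp
    ring
  have htid : Tendsto (fun t : ℝ => t) (nhdsWithin 0 (Set.Ioi 0)) (nhds 0) :=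
    tendsto_id.mono_right nhdsWithin_le_nhds
  have hu : Tendsto (fun t => t * G t) (nhdsWithin 0 (Set.Ioi 0)) (nhds 0) := by
    have := htid.mul hG
    rwa [zero_mul] at this
  have hsmall : ∀ᶠ t in nhdsWithin (0:ℝ) (Set.Ioi 0), |t * G t| ≤ 1/2 := by
    have h := hu.eventually (eventually_abs_sub_lt (0:ℝ) (by norm_num : (0:ℝ) < 1/2))
    filter_upwards [h] with t ht
    rw [sub_zero] at ht
    exact ht.le
  have hg0 : Tendsto (fun t => 2 * (t * G t * G t)) (nhdsWithin 0 (Set.Ioi 0)) (nhds 0) := by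
    have := ((hu.mul hG).const_mul 2)
    rwa [zero_mul, mul_zero] at this
  have hE : Tendsto (fun t => (Real.log (1 + t * G t) - t * G t) / t)
      (nhdsWithin 0 (Set.Ioi 0)) (nhds 0) := by
    apply squeeze_zero_norm' _ hg0
    filter_upwards [hIoc, hsmall] with t ht hts
    rw [Real.norm_eq_abs, abs_div, abs_of_pos ht.1, div_le_iff₀ ht.1]
    have happ := aux_log_approx (u := t * G t) (by linarith [(abs_le.mp hts).1])
    calc |Real.log (1 + t * G t) - t * G t| ≤ 2 * (t * G t) ^ 2 := happ
      _ = 2 * (t * G t * G t) * t := by ring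
  have hmain : Tendsto (fun t : ℝ => t⁻¹ * Real.log (∫ a, a ^ t ∂μ))
      (nhdsWithin 0 (Set.Ioi 0)) (nhds L) := by
    have hsum := hG.add hE
    rw [add_zero] at hsum
    apply Filter.Tendsto.congr' _ hsum
    filter_upwards [hIoc, hsmall] with t ht hts
    have htne : t ≠ 0 := ne_of_gt ht.1
    rw [key t ht.1 (le_trans ht.2 (by norm_num))]
    field_simp
    ring
  have hmap : Tendsto (fun α : ℝ => 1 - α) (nhdsWithin 1 (Set.Iio 1))
      (nhdsWithin 0 (Set.Ioi 0)) := by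
    apply tendsto_nhdsWithin_of_tendsto_nhds_of_eventually_within
    · have h : Tendsto (fun α : ℝ => 1 - α) (nhds 1) (nhds (1 - 1)) :=
        tendsto_const_nhds.sub tendsto_id
      rw [sub_self] at h
      exact h.mono_left nhdsWithin_le_nhds
    · filter_upwards [self_mem_nhdsWithin] with α hα
      exact Set.mem_Ioi.mpr (by simp only [Set.mem_Iio] at hα; linarith)
  have hcomp := (hmain.comp hmap).neg
  apply hcomp.congr
  intro α
  simp only [Function.comp]
  rw [show (α - 1 : ℝ) = -(1 - α) by ring, inv_neg, neg_mul]
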